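/- arXiv:1102.2511 — 6 statements merged into one kernel-verified Lean document; each statement's English description precedes it below -/
import Mathlib

section
/- Let T be a time scale with forward shift σ, and let μ_σ denote the Borel–Stieltjes measure on ℝ with distribution function σ, i.e. μ_σ((a,b]) = σ(b+) − σ(a+) (where f+ denotes the right limit). Then for every t ∈ T one has μ_σ({t}) = σ(t) − t, the graininess of t. -/
open Set MeasureTheory Filter Topology Function

open Classical in
noncomputable def fwd (T : Set ℝ) (t : ℝ) : ℝ :=
  if {s | s ∈ T ∧ t < s}.Nonempty then sInf {s | s ∈ T ∧ t < s} else sSup T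

theorem stieltjes_measure_singleton_eq_graininess
    (T : Set ℝ) (hne : T.Nonempty) (hcl : IsClosed T)
    (F : StieltjesFunction ℝ) (hF : ∀ t, F t = fwd T t)
    (t : ℝ) (ht : t ∈ T) :
    F.measure {t} = ENNReal.ofReal (fwd T t - t) := by
  have hsq : ∀ s, s < t → s ≤ F s ∧ F s ≤ t := by
    intro s hs
    have hne' : {u | u ∈ T ∧ s < u}.Nonempty := ⟨t, ht, hs⟩
    have hF' : F s = sInf {u | u ∈ T ∧ s < u} := by
      rw [hF]; simp [fwd, hne']
    constructor
    · rw [hF']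
      exact le_csInf hne' fun u hu => hu.2.le
    · rw [hF']
      exact csInf_le ⟨s, fun u hu => hu.2.le⟩ ⟨ht, hs⟩
  have htend : Tendsto F (𝓝[<] t) (𝓝 t) := by
    have h1 : Tendsto (fun s : ℝ => s) (𝓝[<] t) (𝓝 t) :=
      tendsto_id.mono_left nhdsWithin_le_nhds
    have h2 : Tendsto (fun _ : ℝ => t) (𝓝[<] t) (𝓝 t) := tendsto_const_nhds
    refine tendsto_of_tendsto_of_tendsto_of_le_of_le' h1 h2 ?_ ?_
    · filter_upwards [self_mem_nhdsWithin] with s hs using (hsq s hs).1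
    · filter_upwards [self_mem_nhdsWithin] with s hs using (hsq s hs).2
  have hll : leftLim F t = t :=
    leftLim_eq_of_tendsto htend
  rw [F.measure_singleton, hll, hF]
end

section
/- Let T be a time scale and μ_σ the Borel measure on ℝ with distribution function σ. Then the topological support of μ_σ equals T^κ, the closure of T \ {sup T}; in particular, if T has no left scattered maximum, supp(μ_σ) = T. -/
open Set MeasureTheory Filter Topology Function

open Classical in
noncomputable def Tkappa (T : Set ℝ) : Set ℝ :=
  if BddAbove T then closure (T \ {sSup T}) else T

lemma fwd_le_of_mem {T : Set ℝ} {x t : ℝ} (hx : x ∈ T) (h : t < x) : fwd T t ≤ x := by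
  classical
  rw [fwd, if_pos ⟨x, hx, h⟩]
  exact csInf_le ⟨t, fun s hs => le_of_lt hs.2⟩ ⟨hx, h⟩

lemma le_fwd_of_nonempty {T : Set ℝ} {t : ℝ} (h : {s | s ∈ T ∧ t < s}.Nonempty) :
    t ≤ fwd T t := by
  classical
  rw [fwd, if_pos h]
  exact le_csInf h (fun s hs => hs.2.le)

lemma fwd_eq_of_set_eq {T : Set ℝ} {a b : ℝ}
    (h : {s | s ∈ T ∧ a < s} = {s | s ∈ T ∧ b < s}) : fwd T a = fwd T b := by
  classical
  rw [fwd, fwd, h]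

theorem support_stieltjes_measure_eq_Tkappa
    (T : Set ℝ) (hne : T.Nonempty) (hcl : IsClosed T)
    (F : StieltjesFunction ℝ) (hF : ∀ t, F t = fwd T t) :
    {x : ℝ | ∀ U ∈ 𝓝 x, F.measure U ≠ 0} = Tkappa T := by
  classical
  -- Step 1: x is in the support iff F increases across x
  have step1 : ∀ x : ℝ, (∀ U ∈ 𝓝 x, F.measure U ≠ 0) ↔
      ∀ ε > (0:ℝ), F (x - ε) < F (x + ε) := by
    intro x
    constructor
    · intro h ε hε
      by_contra hcon
      push_neg at hcon
      have hIoo : Ioo (x - ε) (x + ε) ∈ 𝓝 x :=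
        Ioo_mem_nhds (by linarith) (by linarith)
      have h0 : F.measure (Ioc (x - ε) (x + ε)) = 0 := by
        rw [F.measure_Ioc]
        exact ENNReal.ofReal_eq_zero.2 (by linarith)
      have : F.measure (Ioo (x - ε) (x + ε)) = 0 :=
        le_antisymm (h0 ▸ measure_mono Ioo_subset_Ioc_self) zero_le
      exact h _ hIoo this
    · intro h U hU
      obtain ⟨ε, hε, hball⟩ := Metric.mem_nhds_iff.1 hU
      rw [Real.ball_eq_Ioo] at hball
      have hsub : Ioc (x - ε/2) (x + ε/2) ⊆ U := by
        intro a ha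
        exact hball ⟨by linarith [ha.1], by linarith [ha.2]⟩
      have hpos : (0:ℝ) < F (x + ε/2) - F (x - ε/2) := by
        have := h (ε/2) (by linarith)
        linarith
      have : F.measure (Ioc (x - ε/2) (x + ε/2)) ≠ 0 := by
        rw [F.measure_Ioc]
        simpa using hpos
      intro hU0
      exact this (le_antisymm (hU0 ▸ measure_mono hsub) zero_le)
  -- Step 2: F increases across x iff x ∈ Tkappa T
  have hFfwd : ∀ a b : ℝ, (F a < F b ↔ fwd T a < fwd T b) := by
    intro a b; rw [hF, hF]
  ext x
  simp only [mem_setOf_eq, step1]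
  rw [Tkappa]
  by_cases hbdd : BddAbove T
  · rw [if_pos hbdd]
    set M := sSup T with hM
    have hMT : M ∈ T := hcl.csSup_mem hne hbdd
    have hle : ∀ s ∈ T, s ≤ M := fun s hs => le_csSup hbdd hs
    constructor
    · intro h
      by_contra hx
      -- x ∉ closure (T \ {M})
      have hxo : ∃ ε > (0:ℝ), Ioo (x - ε) (x + ε) ∩ (T \ {M}) = ∅ := by
        have : x ∈ (closure (T \ {M}))ᶜ := hx
        obtain ⟨ε, hε, hb⟩ := Metric.mem_nhds_iff.1
          (isClosed_closure.isOpen_compl.mem_nhds this)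
        rw [Real.ball_eq_Ioo] at hb
        refine ⟨ε, hε, ?_⟩
        ext a
        simp only [mem_inter_iff, mem_empty_iff_false, iff_false, not_and]
        intro ha hm
        exact hb ha (subset_closure hm)
      obtain ⟨ε, hε, hIoo⟩ := hxo
      by_cases hxT : x ∈ T
      · -- then x = M
        have hxM : x = M := by
          by_contra hne'
          have hmem : x ∈ Ioo (x - ε) (x + ε) ∩ (T \ {M}) :=
            ⟨⟨by linarith, by linarith⟩, hxT, hne'⟩
          rw [hIoo] at hmem
          exact hmem
        -- fwd constant = M near x
        have hS2 : {s | s ∈ T ∧ x + ε/2 < s} = ∅ := by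
          ext s
          simp only [mem_setOf_eq, mem_empty_iff_false, iff_false, not_and, not_lt]
          intro hs
          linarith [hle s hs]
        have hS1 : {s | s ∈ T ∧ x - ε/2 < s} = {M} := by
          ext s
          simp only [mem_setOf_eq, mem_singleton_iff]
          constructor
          · rintro ⟨hs, hlt⟩
            by_contra hsM
            have hmem : s ∈ Ioo (x - ε) (x + ε) ∩ (T \ {M}) :=
              ⟨⟨by linarith, by linarith [hle s hs]⟩, hs, hsM⟩
            rw [hIoo] at hmem
            exact hmem
          · rintro rfl
            exact ⟨hMT, by linarith⟩
        have hv1 : fwd T (x - ε/2) = M := by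
          rw [fwd, if_pos (hS1 ▸ ⟨M, rfl⟩ : {s | s ∈ T ∧ x - ε/2 < s}.Nonempty), hS1]
          exact csInf_singleton M
        have hv2 : fwd T (x + ε/2) = M := by
          rw [fwd, if_neg (by rw [hS2]; exact not_nonempty_empty)]
        have := h (ε/2) (by linarith)
        rw [hFfwd, hv1, hv2] at this
        exact lt_irrefl _ this
      · -- x ∉ T : T misses a neighborhood of x
        obtain ⟨δ, hδ, hb⟩ := Metric.mem_nhds_iff.1 (hcl.isOpen_compl.mem_nhds hxT)
        rw [Real.ball_eq_Ioo] at hb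
        have hset : {s | s ∈ T ∧ x - δ/2 < s} = {s | s ∈ T ∧ x + δ/2 < s} := by
          ext s
          simp only [mem_setOf_eq, and_congr_right_iff]
          intro hs
          constructor
          · intro hlt
            by_contra hlt'
            push_neg at hlt'
            exact hb ⟨by linarith, by linarith⟩ hs
          · intro hlt; linarith
        have := h (δ/2) (by linarith)
        rw [hFfwd, fwd_eq_of_set_eq hset] at this
        exact lt_irrefl _ this
    · intro hx ε hε
      rw [hFfwd]
      have hxT : x ∈ T := by
        exact hcl.closure_subset_iff.2 Set.diff_subset hx
      have hxM : x ≤ M := hle x hxT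
      rcases lt_or_eq_of_le hxM with hlt | heq
      · have h1 : fwd T (x - ε) ≤ x := fwd_le_of_mem hxT (by linarith)
        by_cases hne2 : {s | s ∈ T ∧ x + ε < s}.Nonempty
        · have h2 : x + ε ≤ fwd T (x + ε) := le_fwd_of_nonempty hne2
          linarith
        · have h2 : fwd T (x + ε) = M := by
            rw [fwd, if_neg hne2]
          rw [h2]
          linarith
      · -- x = M is a left limit of T \ {M}
        obtain ⟨t, ht, htT⟩ := mem_closure_iff.1 hx (Ioo (x - ε) (x + ε)) isOpen_Ioo
          ⟨by linarith, by linarith⟩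
        have htM : t < x := by
          have := lt_of_le_of_ne (hle t htT.1) htT.2
          linarith
        have h1 : fwd T (x - ε) ≤ t := fwd_le_of_mem htT.1 ht.1
        have h2 : fwd T (x + ε) = M := by
          rw [fwd, if_neg]
          rintro ⟨s, hs, hlt⟩
          linarith [hle s hs]
        rw [h2]
        linarith
  · rw [if_neg hbdd]
    have hnonempty : ∀ t : ℝ, {s | s ∈ T ∧ t < s}.Nonempty := by
      intro t
      obtain ⟨s, hs, hlt⟩ := not_bddAbove_iff.1 hbdd t
      exact ⟨s, hs, hlt⟩
    constructor
    · intro h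
      by_contra hxT
      obtain ⟨δ, hδ, hb⟩ := Metric.mem_nhds_iff.1 (hcl.isOpen_compl.mem_nhds hxT)
      rw [Real.ball_eq_Ioo] at hb
      have hset : {s | s ∈ T ∧ x - δ/2 < s} = {s | s ∈ T ∧ x + δ/2 < s} := by
        ext s
        simp only [mem_setOf_eq, and_congr_right_iff]
        intro hs
        constructor
        · intro hlt
          by_contra hlt'
          push_neg at hlt'
          exact hb ⟨by linarith, by linarith⟩ hs
        · intro hlt; linarith
      have := h (δ/2) (by linarith)
      rw [hFfwd, fwd_eq_of_set_eq hset] at this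
      exact lt_irrefl _ this
    · intro hxT ε hε
      rw [hFfwd]
      have h1 : fwd T (x - ε) ≤ x := fwd_le_of_mem hxT (by linarith)
      have h2 : x + ε ≤ fwd T (x + ε) := le_fwd_of_nonempty (hnonempty _)
      linarith
end

section
/- Let T be a time scale, μ_σ the associated Lebesgue–Stieltjes measure, a, b ∈ T with a < b, and f : ℝ → ℝ Borel measurable. Then ∫_{[a,b)} f dμ_σ = ∫_a^b f(ρ(t)) dt, where the right-hand side is a Lebesgue integral; in particular f is μ_σ-integrable on [a,b) if and only if f ∘ ρ is Lebesgue integrable on [a,b). -/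
open Set MeasureTheory Filter Topology Function

open Classical in
noncomputable def bwd (T : Set ℝ) (t : ℝ) : ℝ :=
  if {s | s ∈ T ∧ s < t}.Nonempty then sSup {s | s ∈ T ∧ s < t} else sInf T

lemma bwd_eq_pos {T : Set ℝ} {t : ℝ} (h : {s | s ∈ T ∧ s < t}.Nonempty) :
    bwd T t = sSup {s | s ∈ T ∧ s < t} := by
  unfold bwd; rw [if_pos h]

lemma bwd_eq_neg {T : Set ℝ} {t : ℝ} (h : ¬ {s | s ∈ T ∧ s < t}.Nonempty) :
    bwd T t = sInf T := by
  unfold bwd; rw [if_neg h]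

lemma fwd_eq_pos {T : Set ℝ} {t : ℝ} (h : {s | s ∈ T ∧ t < s}.Nonempty) :
    fwd T t = sInf {s | s ∈ T ∧ t < s} := by
  unfold fwd; rw [if_pos h]

lemma bwd_mono (T : Set ℝ) (hne : T.Nonempty) : Monotone (bwd T) := by
  intro x y hxy
  by_cases h1 : {s | s ∈ T ∧ s < x}.Nonempty
  · have h2 : {s | s ∈ T ∧ s < y}.Nonempty :=
      h1.mono (fun s hs => ⟨hs.1, lt_of_lt_of_le hs.2 hxy⟩)
    rw [bwd_eq_pos h1, bwd_eq_pos h2]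
    exact csSup_le_csSup ⟨y, fun s hs => hs.2.le⟩ h1
      (fun s hs => ⟨hs.1, lt_of_lt_of_le hs.2 hxy⟩)
  · have hbd : BddBelow T := ⟨x, fun u hu => not_lt.mp (fun h => h1 ⟨u, hu, h⟩)⟩
    rw [bwd_eq_neg h1]
    by_cases h2 : {s | s ∈ T ∧ s < y}.Nonempty
    · rw [bwd_eq_pos h2]
      obtain ⟨s, hsT, hsy⟩ := h2
      exact le_trans (csInf_le hbd hsT) (le_csSup ⟨y, fun u hu => hu.2.le⟩ ⟨hsT, hsy⟩)
    · rw [bwd_eq_neg h2]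

/-- `bwd T t ≤ t` for `t ≥` some point of `T`. -/
lemma bwd_le_self {T : Set ℝ} {a t : ℝ} (ha : a ∈ T) (hat : a ≤ t) : bwd T t ≤ t := by
  by_cases h : {s | s ∈ T ∧ s < t}.Nonempty
  · rw [bwd_eq_pos h]
    exact csSup_le h (fun s hs => hs.2.le)
  · rw [bwd_eq_neg h]
    have hbd : BddBelow T := ⟨t, fun u hu => not_lt.mp (fun h' => h ⟨u, hu, h'⟩)⟩
    exact le_trans (csInf_le hbd ha) hat

lemma le_bwd {T : Set ℝ} {a t : ℝ} (ha : a ∈ T) (hat : a < t) : a ≤ bwd T t := by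
  have h : {s | s ∈ T ∧ s < t}.Nonempty := ⟨a, ha, hat⟩
  rw [bwd_eq_pos h]
  exact le_csSup ⟨t, fun u hu => hu.2.le⟩ ⟨ha, hat⟩

/-- Left limit of the forward-jump Stieltjes function at a point of `T` is the point itself. -/
lemma leftLim_fwd_eq {T : Set ℝ} (F : StieltjesFunction ℝ) (hF : ∀ t, F t = fwd T t)
    {x : ℝ} (hx : x ∈ T) : Function.leftLim F x = x := by
  have htendsto : Tendsto F (𝓝[<] x) (𝓝 (Function.leftLim F x)) :=
    F.mono.tendsto_leftLim x
  have hub : ∀ s, s < x → F s ≤ x := by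
    intro s hs
    have hne' : {u | u ∈ T ∧ s < u}.Nonempty := ⟨x, hx, hs⟩
    rw [hF s, fwd_eq_pos hne']
    exact csInf_le ⟨s, fun u hu => hu.2.le⟩ ⟨hx, hs⟩
  have hlb : ∀ s, s < x → s ≤ F s := by
    intro s hs
    have hne' : {u | u ∈ T ∧ s < u}.Nonempty := ⟨x, hx, hs⟩
    rw [hF s, fwd_eq_pos hne']
    exact le_csInf hne' (fun u hu => hu.2.le)
  have h1 : Function.leftLim F x ≤ x := by
    apply le_of_tendsto htendsto
    filter_upwards [self_mem_nhdsWithin] with s hs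
    exact hub s hs
  have h2 : x ≤ Function.leftLim F x := by
    have hid : Tendsto (fun s : ℝ => s) (𝓝[<] x) (𝓝 x) :=
      tendsto_id.mono_left nhdsWithin_le_nhds
    refine le_of_tendsto_of_tendsto hid htendsto ?_
    filter_upwards [self_mem_nhdsWithin] with s hs
    exact hlb s hs
  exact le_antisymm h1 h2

theorem delta_integral_eq_lebesgue_integral_backward
    (T : Set ℝ) (hne : T.Nonempty) (hcl : IsClosed T)
    (F : StieltjesFunction ℝ) (hF : ∀ t, F t = fwd T t)
    (a b : ℝ) (ha : a ∈ T) (hb : b ∈ T) (hab : a < b)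
    (f : ℝ → ℝ) (hf : Measurable f) :
    (∫ t in Ico a b, f t ∂F.measure) = (∫ t in Ico a b, f (bwd T t)) ∧
    (IntegrableOn f (Ico a b) F.measure ↔
      IntegrableOn (fun t => f (bwd T t)) (Ico a b) volume) := by
  have hmono : Monotone (bwd T) := bwd_mono T hne
  have hmeas : Measurable (bwd T) := hmono.measurable
  have hlla : Function.leftLim F a = a := leftLim_fwd_eq F hF ha
  have hllb : Function.leftLim F b = b := leftLim_fwd_eq F hF hb
  -- key measure identity
  have key : F.measure.restrict (Ico a b) = (volume.restrict (Ico a b)).map (bwd T) := by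
    haveI : IsFiniteMeasure (F.measure.restrict (Ico a b)) := by
      constructor
      rw [Measure.restrict_apply_univ, F.measure_Ico, hlla, hllb]
      exact ENNReal.ofReal_lt_top
    refine Measure.ext_of_Iic _ _ (fun v => ?_)
    rw [Measure.map_apply hmeas measurableSet_Iic,
      Measure.restrict_apply measurableSet_Iic,
      Measure.restrict_apply (hmeas measurableSet_Iic)]
    rcases lt_or_ge v a with hva | hav
    · -- v < a : both sides are 0
      have h1 : Iic v ∩ Ico a b = ∅ := by
        ext t
        simp only [mem_inter_iff, mem_Iic, mem_Ico, mem_empty_iff_false, iff_false]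
        rintro ⟨htv, hta, -⟩
        exact absurd (le_trans hta htv) (not_le.mpr hva)
      have h2 : bwd T ⁻¹' Iic v ∩ Ico a b ⊆ {a} := by
        rintro t ⟨htv, hta, -⟩
        have htv' : bwd T t ≤ v := htv
        by_contra hta'
        have h' : a < t := lt_of_le_of_ne hta (fun h => hta' h.symm)
        exact absurd (le_trans (le_bwd ha h') htv') (not_le.mpr hva)
      rw [h1, measure_empty]
      exact (le_antisymm (le_trans (measure_mono h2) (by simp)) zero_le).symm
    rcases lt_or_ge v b with hvb | hbv
    · -- a ≤ v < b
      have hnev : {s | s ∈ T ∧ v < s}.Nonempty := ⟨b, hb, hvb⟩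
      have hFv : F v = sInf {s | s ∈ T ∧ v < s} := by rw [hF v, fwd_eq_pos hnev]
      have hvFv : v ≤ F v := by
        rw [hFv]; exact le_csInf hnev (fun u hu => hu.2.le)
      have hFvb : F v ≤ b := by
        rw [hFv]; exact csInf_le ⟨v, fun u hu => hu.2.le⟩ ⟨hb, hvb⟩
      have h1 : Iic v ∩ Ico a b = Icc a v := by
        ext t
        simp only [mem_inter_iff, mem_Iic, mem_Ico, mem_Icc]
        constructor
        · rintro ⟨htv, hta, -⟩; exact ⟨hta, htv⟩
        · rintro ⟨hta, htv⟩; exact ⟨htv, hta, lt_of_le_of_lt htv hvb⟩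
      -- lower bound set inclusion
      have hlow : Ico a (F v) ⊆ bwd T ⁻¹' Iic v ∩ Ico a b := by
        rintro t ⟨hta, htFv⟩
        refine ⟨?_, hta, lt_of_lt_of_le htFv hFvb⟩
        simp only [mem_preimage, mem_Iic]
        by_cases hset : {s | s ∈ T ∧ s < t}.Nonempty
        · rw [bwd_eq_pos hset]
          refine csSup_le hset (fun s hs => ?_)
          by_contra hsv
          push_neg at hsv
          have : F v ≤ s := by
            rw [hFv]; exact csInf_le ⟨v, fun u hu => hu.2.le⟩ ⟨hs.1, hsv⟩
          exact absurd htFv (not_lt.mpr (this.trans hs.2.le))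
        · rw [bwd_eq_neg hset]
          have hbd : BddBelow T := ⟨t, fun u hu => not_lt.mp (fun h' => hset ⟨u, hu, h'⟩)⟩
          exact le_trans (csInf_le hbd ha) hav
      -- upper bound set inclusion
      have hup : bwd T ⁻¹' Iic v ∩ Ico a b ⊆ Icc a (F v) := by
        rintro t ⟨htv, hta, htb⟩
        simp only [mem_preimage, mem_Iic] at htv
        refine ⟨hta, ?_⟩
        by_contra h'
        push_neg at h'
        have : sInf {s | s ∈ T ∧ v < s} < t := by rw [← hFv]; exact h'
        obtain ⟨u, hu, hut⟩ := exists_lt_of_csInf_lt hnev this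
        have : v < bwd T t := lt_of_lt_of_le hu.2 (le_bwd hu.1 hut)
        exact absurd htv (not_le.mpr this)
      rw [h1, F.measure_Icc, hlla]
      refine le_antisymm ?_ ?_
      · calc ENNReal.ofReal (F v - a) = volume (Ico a (F v)) := Real.volume_Ico.symm
          _ ≤ volume (bwd T ⁻¹' Iic v ∩ Ico a b) := measure_mono hlow
      · calc volume (bwd T ⁻¹' Iic v ∩ Ico a b) ≤ volume (Icc a (F v)) := measure_mono hup
          _ = ENNReal.ofReal (F v - a) := Real.volume_Icc
    · -- b ≤ v
      have h1 : Iic v ∩ Ico a b = Ico a b := by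
        ext t
        simp only [mem_inter_iff, mem_Iic, mem_Ico]
        exact ⟨fun h => h.2, fun h => ⟨le_trans h.2.le hbv, h⟩⟩
      have h2 : bwd T ⁻¹' Iic v ∩ Ico a b = Ico a b := by
        ext t
        simp only [mem_inter_iff, mem_preimage, mem_Iic, mem_Ico]
        refine ⟨fun h => h.2, fun h => ⟨?_, h⟩⟩
        exact le_trans (bwd_le_self ha h.1) (le_trans h.2.le hbv)
      rw [h1, h2, F.measure_Ico, hlla, hllb, Real.volume_Ico]
  constructor
  · rw [key,
      integral_map hmeas.aemeasurable (hf.aestronglyMeasurable)]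
  · rw [IntegrableOn, IntegrableOn, key,
      integrable_map_measure (hf.aestronglyMeasurable) hmeas.aemeasurable]
    rfl
end

section
/- (Main Lemma) Let T be a time scale, μ_σ the associated measure, f : T → ℂ, and f̄ its extension to ℝ defined by f̄(t) = f(σ(t)) for t ∉ T. Suppose f is delta differentiable at some t ∈ T^κ and f̄ is locally of bounded variation. Then the symmetric derivative limit lim_{ε↓0} [f̄−(t+ε) − f̄+(t−ε)] / [σ−(t+ε) − σ+(t−ε)] exists and equals f^Δ(t). (Here g± denote one-sided limits.) -/
open Set MeasureTheory Filter Topology Function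

/-- `f` has Hilger (delta) derivative `L` at the point `t` of the time scale `T`. -/
def HasDeltaDerivAt (T : Set ℝ) (f : ℝ → ℂ) (t : ℝ) (L : ℂ) : Prop :=
  ∀ ε > (0:ℝ), ∃ U ∈ nhdsWithin t T, ∀ s ∈ U,
    ‖f (fwd T t) - f s - L * ((fwd T t : ℂ) - (s : ℂ))‖ ≤ ε * |fwd T t - s|

open Classical in
noncomputable def tsExtend (T : Set ℝ) (f : ℝ → ℂ) : ℝ → ℂ :=
  fun t => if t ∈ T then f t else f (fwd T t)

open Classical in
noncomputable def tsu (T : Set ℝ) (s : ℝ) : ℝ := if s ∈ T then s else fwd T s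

section helpers
variable {T : Set ℝ} (hne : T.Nonempty) (hcl : IsClosed T)

lemma ts_bddAbove {x : ℝ} (h : ¬ {s | s ∈ T ∧ x < s}.Nonempty) : BddAbove T :=
  ⟨x, fun s hs => not_lt.1 fun hlt => h ⟨s, hs, hlt⟩⟩

include hcl hne in
lemma fwd_mem (x : ℝ) : fwd T x ∈ T := by
  unfold fwd
  split_ifs with h
  · have h1 : sInf {s | s ∈ T ∧ x < s} ∈ closure {s | s ∈ T ∧ x < s} :=
      csInf_mem_closure h ⟨x, fun s hs => hs.2.le⟩
    exact hcl.closure_subset_iff.2 (fun s hs => hs.1) h1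
  · exact hcl.csSup_mem hne (ts_bddAbove h)

lemma fwd_le {x p : ℝ} (hp : p ∈ T) (hxp : x < p) : fwd T x ≤ p := by
  unfold fwd
  rw [if_pos ⟨p, hp, hxp⟩]
  exact csInf_le ⟨x, fun s hs => hs.2.le⟩ ⟨hp, hxp⟩

lemma le_fwd {x p : ℝ} (hp : p ∈ T) (hxp : x < p) : x ≤ fwd T x := by
  unfold fwd
  rw [if_pos ⟨p, hp, hxp⟩]
  exact le_csInf ⟨p, hp, hxp⟩ fun s hs => hs.2.le

lemma self_le_fwd {x : ℝ} (hx : x ∈ T) : x ≤ fwd T x := by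
  unfold fwd
  split_ifs with h
  · exact le_csInf h fun s hs => hs.2.le
  · exact le_csSup (ts_bddAbove h) hx

lemma fwd_mono : Monotone (fwd T) := by
  intro a b hab
  by_cases hb : {s | s ∈ T ∧ b < s}.Nonempty
  · have hsub : {s | s ∈ T ∧ b < s} ⊆ {s | s ∈ T ∧ a < s} :=
      fun s hs => ⟨hs.1, lt_of_le_of_lt hab hs.2⟩
    unfold fwd
    rw [if_pos hb, if_pos (hb.mono hsub)]
    exact csInf_le_csInf ⟨a, fun s hs => hs.2.le⟩ hb hsub
  · by_cases ha : {s | s ∈ T ∧ a < s}.Nonempty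
    · obtain ⟨p, hpT, hap⟩ := ha
      unfold fwd
      rw [if_pos ⟨p, hpT, hap⟩, if_neg hb]
      exact le_trans (csInf_le ⟨a, fun s hs => hs.2.le⟩ ⟨hpT, hap⟩)
        (le_csSup (ts_bddAbove hb) hpT)
    · unfold fwd; rw [if_neg ha, if_neg hb]

include hcl hne in
lemma tsu_mem (s : ℝ) : tsu T s ∈ T := by
  unfold tsu; split_ifs with h
  · exact h
  · exact fwd_mem hne hcl s

lemma tsu_le {s p : ℝ} (hp : p ∈ T) (hsp : s ≤ p) : tsu T s ≤ p := by
  unfold tsu; split_ifs with h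
  · exact hsp
  · exact fwd_le hp (lt_of_le_of_ne hsp (fun he => h (he ▸ hp)))

lemma le_tsu {s p : ℝ} (hp : p ∈ T) (hsp : s < p) : s ≤ tsu T s := by
  unfold tsu; split_ifs with h
  · exact le_rfl
  · exact le_fwd hp hsp

lemma tsu_le_fwd (s : ℝ) : tsu T s ≤ fwd T s := by
  unfold tsu; split_ifs with h
  · exact self_le_fwd h
  · exact le_rfl

lemma tsu_mono : Monotone (tsu T) := by
  intro a b hab
  by_cases hb : b ∈ T
  · have hbb : tsu T b = b := by unfold tsu; rw [if_pos hb]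
    rw [hbb]; exact tsu_le hb hab
  · calc tsu T a ≤ fwd T a := tsu_le_fwd a
      _ ≤ fwd T b := fwd_mono hab
      _ = tsu T b := by unfold tsu; rw [if_neg hb]

lemma fwd_le_tsu {a b : ℝ} (hab : a < b) : fwd T a ≤ tsu T b := by
  by_cases hb : b ∈ T
  · unfold tsu; rw [if_pos hb]; exact fwd_le hb hab
  · unfold tsu; rw [if_neg hb]; exact fwd_mono hab.le

lemma leftLim_fwd_eq_tsu (x : ℝ) : leftLim (fwd T) x = leftLim (tsu T) x := by
  apply le_antisymm
  · apply le_of_tendsto ((fwd_mono (T := T)).tendsto_leftLim x)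
    filter_upwards [self_mem_nhdsWithin] with s (hs : s < x)
    calc fwd T s ≤ tsu T ((s + x) / 2) := fwd_le_tsu (by linarith)
      _ ≤ leftLim (tsu T) x := (tsu_mono (T := T)).le_leftLim (by linarith)
  · exact le_of_tendsto_of_tendsto' ((tsu_mono (T := T)).tendsto_leftLim x)
      ((fwd_mono (T := T)).tendsto_leftLim x) (fun s => tsu_le_fwd s)

lemma rightLim_fwd_eq_tsu (y : ℝ) : rightLim (fwd T) y = rightLim (tsu T) y := by
  apply le_antisymm
  · apply ge_of_tendsto ((tsu_mono (T := T)).tendsto_rightLim y)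
    filter_upwards [self_mem_nhdsWithin] with s (hs : y < s)
    calc rightLim (fwd T) y ≤ fwd T ((y + s) / 2) :=
          (fwd_mono (T := T)).rightLim_le (by linarith)
      _ ≤ tsu T s := fwd_le_tsu (by linarith)
  · exact le_of_tendsto_of_tendsto' ((tsu_mono (T := T)).tendsto_rightLim y)
      ((fwd_mono (T := T)).tendsto_rightLim y) (fun s => tsu_le_fwd s)

end helpers

lemma bv_tendsto_onesided {F : ℝ → ℂ} (hbv : LocallyBoundedVariationOn F Set.univ) (x : ℝ) :
    (∃ l, Tendsto F (𝓝[<] x) (𝓝 l)) ∧ (∃ r, Tendsto F (𝓝[>] x) (𝓝 r)) := by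
  have hre : LocallyBoundedVariationOn (fun s => (F s).re) Set.univ := by
    have := Complex.reCLM.lipschitz.comp_locallyBoundedVariationOn hbv
    simpa [Function.comp_def] using this
  have him : LocallyBoundedVariationOn (fun s => (F s).im) Set.univ := by
    have := Complex.imCLM.lipschitz.comp_locallyBoundedVariationOn hbv
    simpa [Function.comp_def] using this
  obtain ⟨p₁, q₁, hp₁, hq₁, hre_eq⟩ := hre.exists_monotoneOn_sub_monotoneOn
  obtain ⟨p₂, q₂, hp₂, hq₂, him_eq⟩ := him.exists_monotoneOn_sub_monotoneOn
  rw [monotoneOn_univ] at hp₁ hq₁ hp₂ hq₂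
  have hrefun : ∀ s, (F s).re = p₁ s - q₁ s := fun s => congrFun hre_eq s
  have himfun : ∀ s, (F s).im = p₂ s - q₂ s := fun s => congrFun him_eq s
  constructor
  · refine ⟨(((leftLim p₁ x - leftLim q₁ x : ℝ) : ℂ) +
      ((leftLim p₂ x - leftLim q₂ x : ℝ) : ℂ) * Complex.I), ?_⟩
    have h1 : Tendsto (fun s => (F s).re) (𝓝[<] x) (𝓝 (leftLim p₁ x - leftLim q₁ x)) := by
      simp only [hrefun]
      exact (hp₁.tendsto_leftLim x).sub (hq₁.tendsto_leftLim x)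
    have h2 : Tendsto (fun s => (F s).im) (𝓝[<] x) (𝓝 (leftLim p₂ x - leftLim q₂ x)) := by
      simp only [himfun]
      exact (hp₂.tendsto_leftLim x).sub (hq₂.tendsto_leftLim x)
    have := (((Complex.continuous_ofReal.tendsto _).comp h1).add
      (((Complex.continuous_ofReal.tendsto _).comp h2).mul_const Complex.I))
    exact this.congr (fun s => Complex.re_add_im (F s))
  · refine ⟨(((rightLim p₁ x - rightLim q₁ x : ℝ) : ℂ) +
      ((rightLim p₂ x - rightLim q₂ x : ℝ) : ℂ) * Complex.I), ?_⟩
    have h1 : Tendsto (fun s => (F s).re) (𝓝[>] x) (𝓝 (rightLim p₁ x - rightLim q₁ x)) := by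
      simp only [hrefun]
      exact (hp₁.tendsto_rightLim x).sub (hq₁.tendsto_rightLim x)
    have h2 : Tendsto (fun s => (F s).im) (𝓝[>] x) (𝓝 (rightLim p₂ x - rightLim q₂ x)) := by
      simp only [himfun]
      exact (hp₂.tendsto_rightLim x).sub (hq₂.tendsto_rightLim x)
    have := (((Complex.continuous_ofReal.tendsto _).comp h1).add
      (((Complex.continuous_ofReal.tendsto _).comp h2).mul_const Complex.I))
    exact this.congr (fun s => Complex.re_add_im (F s))

lemma key_bound {l : Filter ℝ} [l.NeBot] {uu : ℝ → ℝ} {FF : ℝ → ℂ} {f : ℝ → ℂ}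
    {B : ℝ} {VV : ℂ} {c ε' : ℝ} {L : ℂ}
    (hu : Tendsto uu l (𝓝 B)) (hFt : Tendsto FF l (𝓝 VV))
    (hFe : ∀ s, FF s = f (uu s))
    (hG : ∀ᶠ s in l, ‖f c - f (uu s) - L * ((c : ℂ) - (uu s : ℂ))‖ ≤ ε' * |c - uu s|) :
    ‖f c - VV - L * ((c : ℂ) - (B : ℂ))‖ ≤ ε' * |c - B| := by
  have huC : Tendsto (fun s => ((uu s : ℝ) : ℂ)) l (𝓝 (B : ℂ)) :=
    (Complex.continuous_ofReal.tendsto B).comp hu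
  have ta : Tendsto (fun s => ‖f c - FF s - L * ((c : ℂ) - (uu s : ℂ))‖) l
      (𝓝 ‖f c - VV - L * ((c : ℂ) - (B : ℂ))‖) :=
    ((tendsto_const_nhds.sub hFt).sub ((tendsto_const_nhds.sub huC).const_mul L)).norm
  have tb : Tendsto (fun s => ε' * |c - uu s|) l (𝓝 (ε' * |c - B|)) :=
    ((tendsto_const_nhds.sub hu).abs).const_mul ε'
  refine le_of_tendsto_of_tendsto ta tb ?_
  filter_upwards [hG] with s hs
  simpa [hFe s] using hs

theorem hilger_deriv_eq_radon_nikodym_deriv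
    (T : Set ℝ) (hne : T.Nonempty) (hcl : IsClosed T)
    (f : ℝ → ℂ) (t : ℝ) (ht : t ∈ Tkappa T) (L : ℂ)
    (hd : HasDeltaDerivAt T f t L)
    (hbv : LocallyBoundedVariationOn (tsExtend T f) Set.univ) :
    Tendsto (fun ε : ℝ =>
        (leftLim (tsExtend T f) (t + ε) - rightLim (tsExtend T f) (t - ε)) /
        (((leftLim (fwd T) (t + ε) - rightLim (fwd T) (t - ε) : ℝ)) : ℂ))
      (𝓝[>] (0:ℝ)) (𝓝 L) := by
  have htT : t ∈ T := by
    unfold Tkappa at ht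
    split_ifs at ht with hbd
    · exact hcl.closure_subset_iff.2 (fun s hs => hs.1) ht
    · exact ht
  have hFeq : ∀ s, tsExtend T f s = f (tsu T s) := by
    intro s; unfold tsExtend tsu; split_ifs <;> rfl
  rw [Metric.tendsto_nhdsWithin_nhds]
  intro ε'' hε''
  set ε' := ε'' / 2 with hε'def
  have hε' : 0 < ε' := half_pos hε''
  obtain ⟨U, hU, hUe⟩ := hd ε' hε'
  obtain ⟨δ, hδ, hδsub⟩ := Metric.mem_nhdsWithin_iff.1 hU
  set c := fwd T t with hcdef
  have htc : t ≤ c := self_le_fwd htT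
  have hG : ∀ v, v ∈ T → |v - t| < δ →
      ‖f c - f v - L * ((c:ℂ) - (v:ℂ))‖ ≤ ε' * |c - v| := by
    intro v hv hvd
    exact hUe v (hδsub ⟨by rwa [Metric.mem_ball, Real.dist_eq], hv⟩)
  have hGc : ‖f c - f c - L * ((c:ℂ) - (c:ℂ))‖ ≤ ε' * |c - c| := by simp
  have hAle : ∀ ε : ℝ, 0 < ε → rightLim (tsu T) (t - ε) ≤ t := by
    intro ε hε
    calc rightLim (tsu T) (t - ε) ≤ tsu T ((t - ε + t)/2) :=
          tsu_mono.rightLim_le (by linarith)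
      _ ≤ t := tsu_le htT (by linarith)
  have hcB : ∀ ε : ℝ, 0 < ε → c ≤ leftLim (tsu T) (t + ε) := by
    intro ε hε
    rw [← leftLim_fwd_eq_tsu]
    exact fwd_mono.le_leftLim (by linarith)
  have core : ∀ ε : ℝ, 0 < ε → ε < δ →
      (∀ᶠ s in 𝓝[<] (t + ε),
        ‖f c - f (tsu T s) - L * ((c:ℂ) - (tsu T s : ℂ))‖ ≤ ε' * |c - tsu T s|) →
      rightLim (tsu T) (t - ε) < leftLim (tsu T) (t + ε) →
      dist ((leftLim (tsExtend T f) (t + ε) - rightLim (tsExtend T f) (t - ε)) /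
        (((leftLim (fwd T) (t + ε) - rightLim (fwd T) (t - ε) : ℝ)) : ℂ)) L < ε'' := by
    intro ε hε hεδ hRg hBA
    have hyt : t - ε < t := by linarith
    have htx : t < t + ε := by linarith
    set B := leftLim (tsu T) (t + ε) with hBdef
    set A := rightLim (tsu T) (t - ε) with hAdef
    have hLg : ∀ᶠ s in 𝓝[>] (t - ε),
        ‖f c - f (tsu T s) - L * ((c:ℂ) - (tsu T s:ℂ))‖ ≤ ε' * |c - tsu T s| := by
      filter_upwards [Ioo_mem_nhdsGT_of_mem (⟨le_refl (t - ε), hyt⟩ : t - ε ∈ Ico (t - ε) t)]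
        with s hs
      have h1 : tsu T s ∈ T := tsu_mem hne hcl s
      have h2 : tsu T s ≤ t := tsu_le htT hs.2.le
      have h3 : s ≤ tsu T s := le_tsu htT hs.2
      refine hG _ h1 ?_
      rw [abs_sub_comm, abs_of_nonneg (by linarith)]
      have := hs.1
      linarith
    obtain ⟨V, hVt⟩ := (bv_tendsto_onesided hbv (t + ε)).1
    obtain ⟨W, hWt⟩ := (bv_tendsto_onesided hbv (t - ε)).2
    have hBt : Tendsto (tsu T) (𝓝[<] (t + ε)) (𝓝 B) := tsu_mono.tendsto_leftLim _
    have hAt : Tendsto (tsu T) (𝓝[>] (t - ε)) (𝓝 A) := tsu_mono.tendsto_rightLim _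
    have hVb := key_bound hBt hVt hFeq hRg
    have hWb := key_bound hAt hWt hFeq hLg
    have hcB' : c ≤ B := hcB ε hε
    have hAt' : A ≤ t := hAle ε hε
    have hAc : A ≤ c := hAt'.trans htc
    have hBA0 : (0:ℝ) < B - A := sub_pos.2 hBA
    have e1 : leftLim (tsExtend T f) (t + ε) = V :=
      leftLim_eq_of_tendsto hVt
    have e2 : rightLim (tsExtend T f) (t - ε) = W :=
      rightLim_eq_of_tendsto hWt
    have e3 : leftLim (fwd T) (t + ε) = B := leftLim_fwd_eq_tsu _
    have e4 : rightLim (fwd T) (t - ε) = A := rightLim_fwd_eq_tsu _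
    rw [dist_eq_norm, e1, e2, e3, e4]
    have habs1 : |c - B| = B - c := by rw [abs_sub_comm]; exact abs_of_nonneg (by linarith)
    have habs2 : |c - A| = c - A := abs_of_nonneg (by linarith)
    have hnum : ‖(V - W) - L * ((B:ℂ) - (A:ℂ))‖ ≤ ε' * (B - A) := by
      have hid : (V - W) - L * ((B:ℂ) - (A:ℂ))
          = (f c - W - L * ((c:ℂ) - (A:ℂ))) - (f c - V - L * ((c:ℂ) - (B:ℂ))) := by ring
      rw [hid]
      calc ‖(f c - W - L * ((c:ℂ) - (A:ℂ))) - (f c - V - L * ((c:ℂ) - (B:ℂ)))‖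
          ≤ ‖f c - W - L * ((c:ℂ) - (A:ℂ))‖ + ‖f c - V - L * ((c:ℂ) - (B:ℂ))‖ :=
            norm_sub_le _ _
        _ ≤ ε' * (c - A) + ε' * (B - c) := add_le_add (habs2 ▸ hWb) (habs1 ▸ hVb)
        _ = ε' * (B - A) := by ring
    have hcast : ((B - A : ℝ) : ℂ) = (B:ℂ) - (A:ℂ) := by push_cast; ring
    have hden : ((B:ℂ) - (A:ℂ)) ≠ 0 := by
      rw [← hcast]; exact Complex.ofReal_ne_zero.2 (ne_of_gt hBA0)
    have hq : ((V - W) - L * ((B:ℂ) - (A:ℂ))) / ((B:ℂ) - (A:ℂ))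
        = (V - W) / ((B:ℂ) - (A:ℂ)) - L := by
      rw [sub_div, mul_div_assoc, div_self hden, mul_one]
    have hnormden : ‖(B:ℂ) - (A:ℂ)‖ = B - A := by
      rw [← hcast, Complex.norm_real]; exact abs_of_pos hBA0
    rw [hcast, ← hq, norm_div, hnormden]
    calc ‖(V - W) - L * ((B:ℂ) - (A:ℂ))‖ / (B - A)
        ≤ ε' * (B - A) / (B - A) := by
          exact div_le_div_of_nonneg_right hnum hBA0.le
      _ = ε' := by field_simp
      _ < ε'' := by rw [hε'def]; linarith
  rcases htc.lt_or_eq with hlt | heq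
  · -- Case I : t right-scattered, t < c
    refine ⟨min δ (c - t), lt_min hδ (by linarith), ?_⟩
    intro ε hεmem hεd
    have hε : 0 < ε := hεmem
    rw [Real.dist_eq, sub_zero, abs_of_pos hε] at hεd
    have hεδ : ε < δ := lt_of_lt_of_le hεd (min_le_left _ _)
    have hεc : ε < c - t := lt_of_lt_of_le hεd (min_le_right _ _)
    apply core ε hε hεδ
    · filter_upwards [Ioo_mem_nhdsLT_of_mem
        (⟨by linarith, le_refl (t + ε)⟩ : t + ε ∈ Ioc t (t + ε))] with s hs
      have hsc : s < c := by have := hs.2; linarith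
      have hsT : s ∉ T := fun hmem => absurd (fwd_le hmem hs.1) (not_le.2 hsc)
      have htsu : tsu T s = c := by
        unfold tsu; rw [if_neg hsT]
        apply le_antisymm
        · exact fwd_le (fwd_mem hne hcl t) hsc
        · exact fwd_mono hs.1.le
      rw [htsu]; simpa using hGc
    · have h1 := hAle ε hε
      have h2 := hcB ε hε
      linarith
  · -- t = c
    by_cases hS : {s | s ∈ T ∧ t < s}.Nonempty
    · -- Case II : right-dense
      have hinf : sInf {s | s ∈ T ∧ t < s} = t := by
        have hcval : c = sInf {s | s ∈ T ∧ t < s} := by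
          rw [hcdef]; unfold fwd; rw [if_pos hS]
        rw [← hcval, ← heq]
      obtain ⟨p, ⟨hpT, htp⟩, hpδ⟩ := exists_lt_of_csInf_lt hS
        (show sInf {s | s ∈ T ∧ t < s} < t + δ by rw [hinf]; linarith)
      refine ⟨min δ (p - t), lt_min hδ (by linarith), ?_⟩
      intro ε hεmem hεd
      have hε : 0 < ε := hεmem
      rw [Real.dist_eq, sub_zero, abs_of_pos hε] at hεd
      have hεδ : ε < δ := lt_of_lt_of_le hεd (min_le_left _ _)
      have hεp : ε < p - t := lt_of_lt_of_le hεd (min_le_right _ _)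
      apply core ε hε hεδ
      · filter_upwards [Ioo_mem_nhdsLT_of_mem
          (⟨by linarith, le_refl (t + ε)⟩ : t + ε ∈ Ioc t (t + ε))] with s hs
        have hsp : s < p := by have := hs.2; linarith
        have h1 : tsu T s ∈ T := tsu_mem hne hcl s
        have h2 : tsu T s ≤ p := tsu_le hpT hsp.le
        have h3 : s ≤ tsu T s := le_tsu hpT hsp
        refine hG _ h1 ?_
        rw [abs_of_nonneg (by have := hs.1; linarith)]
        have := hs.1
        have := htp
        linarith
      · have hxB : t + ε ≤ leftLim (tsu T) (t + ε) := by
          refine le_of_tendsto_of_tendsto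
            (tendsto_id.mono_right nhdsWithin_le_nhds) (tsu_mono.tendsto_leftLim _) ?_
          filter_upwards [Ioo_mem_nhdsLT_of_mem
            (⟨by linarith, le_refl (t + ε)⟩ : t + ε ∈ Ioc t (t + ε))] with s hs
          have h4 : s ≤ tsu T s := le_tsu hpT (by have := hs.2; linarith)
          exact h4
        have h1 := hAle ε hε
        linarith
    · -- Case III : t = max T
      have hbd : BddAbove T := ts_bddAbove hS
      have hsup : sSup T = t :=
        le_antisymm (csSup_le hne fun s hs => not_lt.1 fun h => hS ⟨s, hs, h⟩)
          (le_csSup hbd htT)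
      have htcl : t ∈ closure (T \ {t}) := by
        unfold Tkappa at ht; rw [if_pos hbd, hsup] at ht; exact ht
      have htsu_top : ∀ s, t < s → tsu T s = c := by
        intro s hts
        have hsT : s ∉ T := fun h => hS ⟨s, h, hts⟩
        have hS2 : ¬ {r | r ∈ T ∧ s < r}.Nonempty :=
          fun ⟨r, hr⟩ => hS ⟨r, hr.1, lt_trans hts hr.2⟩
        unfold tsu fwd
        rw [if_neg hsT, if_neg hS2, hsup, heq]
      refine ⟨δ, hδ, ?_⟩
      intro ε hεmem hεd
      have hε : 0 < ε := hεmem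
      rw [Real.dist_eq, sub_zero, abs_of_pos hε] at hεd
      obtain ⟨q, hq, hqd⟩ := Metric.mem_closure_iff.1 htcl ε hε
      have hqT : q ∈ T := hq.1
      have hqt : q < t :=
        lt_of_le_of_ne (not_lt.1 fun h => hS ⟨q, hqT, h⟩) hq.2
      have hqy : t - ε < q := by
        rw [Real.dist_eq, abs_of_nonneg (by linarith)] at hqd
        linarith
      apply core ε hε hεd
      · filter_upwards [Ioo_mem_nhdsLT_of_mem
          (⟨by linarith, le_refl (t + ε)⟩ : t + ε ∈ Ioc t (t + ε))] with s hs
        rw [htsu_top s hs.1]; simpa using hGc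
      · have hBt : leftLim (tsu T) (t + ε) = c := by
          apply le_antisymm
          · calc leftLim (tsu T) (t + ε) ≤ tsu T (t + ε) := tsu_mono.leftLim_le le_rfl
              _ = c := htsu_top _ (by linarith)
          · exact hcB ε hε
        have hAq : rightLim (tsu T) (t - ε) ≤ q := by
          calc rightLim (tsu T) (t - ε) ≤ tsu T ((t - ε + q)/2) :=
                tsu_mono.rightLim_le (by linarith)
            _ ≤ q := tsu_le hqT (by linarith)
        rw [hBt, ← heq]
        linarith
end

section
/- There exist a time scale T, a dense point t ∈ T, and a function f : T → ℂ that is delta differentiable at t, such that the extension f̄ (with f̄(s) = f(σ(s)) for s ∉ T) is not right differentiable at t. Concretely: for T = {0} ∪ {±1/n! : n ∈ ℕ} and f(0) = 0, f(±1/n!) = ±1/(n+1)!, the function f is delta differentiable at 0 with f^Δ(0) = 0, but for every c > 1 the difference quotients (f̄(c/n!) − f(0))/(c/n!) converge to 1/c ≠ 0 as n → ∞, so f̄ has no right derivative at 0. -/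
open Set MeasureTheory Filter Topology Function

namespace XDE

noncomputable def aa (n : ℕ) : ℝ := ((Nat.factorial (n+1) : ℕ) : ℝ)⁻¹

lemma aa_pos (n : ℕ) : 0 < aa n := by
  unfold aa
  have := Nat.factorial_pos (n+1)
  positivity

lemma aa_strictAnti : StrictAnti aa := by
  intro m n h
  unfold aa
  have h1 : (0:ℝ) < (Nat.factorial (m+1) : ℝ) := by exact_mod_cast Nat.factorial_pos _
  apply inv_strictAnti₀ h1
  exact_mod_cast Nat.factorial_lt_of_lt (Nat.succ_pos m) (by omega)

lemma aa_inj : Function.Injective aa := aa_strictAnti.injective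

lemma aa_succ (n : ℕ) : aa n = (n+2) * aa (n+1) := by
  unfold aa
  rw [show Nat.factorial (n+1+1) = (n+2) * Nat.factorial (n+1) from rfl]
  push_cast
  rw [mul_inv]
  have h1 : (0:ℝ) < (Nat.factorial (n+1) : ℝ) := by exact_mod_cast Nat.factorial_pos _
  field_simp

lemma aa_tendsto : Tendsto aa atTop (𝓝 0) := by
  apply squeeze_zero (f := aa) (g := fun n : ℕ => 1 / (n+1 : ℝ)) (fun n => (aa_pos n).le)
  · intro n
    unfold aa
    rw [one_div]
    apply inv_anti₀ (by positivity)
    exact_mod_cast Nat.self_le_factorial (n+1)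
  · exact tendsto_one_div_add_atTop_nhds_zero_nat

noncomputable def TT : Set ℝ := insert 0 (range aa ∪ range (fun n => - aa n))

lemma zero_mem_TT : (0:ℝ) ∈ TT := mem_insert _ _

lemma aa_mem_TT (n : ℕ) : aa n ∈ TT := Or.inr (Or.inl ⟨n, rfl⟩)

lemma neg_aa_mem_TT (n : ℕ) : -aa n ∈ TT := Or.inr (Or.inr ⟨n, rfl⟩)

lemma mem_TT_iff {x : ℝ} : x ∈ TT ↔ x = 0 ∨ (∃ n, x = aa n) ∨ (∃ n, x = -aa n) := by
  unfold TT
  simp [eq_comm]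

lemma TT_closed : IsClosed TT := by
  have h1 : IsClosed (insert (0:ℝ) (range aa)) :=
    aa_tendsto.isCompact_insert_range.isClosed
  have h2 : IsClosed (insert (0:ℝ) (range (fun n => - aa n))) := by
    have : Tendsto (fun n => - aa n) atTop (𝓝 (0:ℝ)) := by
      simpa using aa_tendsto.neg
    exact this.isCompact_insert_range.isClosed
  have : TT = insert 0 (range aa) ∪ insert 0 (range (fun n => - aa n)) := by
    unfold TT
    rw [insert_union_distrib]
  rw [this]
  exact h1.union h2

open Classical in
noncomputable def ff (x : ℝ) : ℂ :=
  if hx : ∃ n, x = aa n then ((aa (hx.choose + 1) : ℝ) : ℂ)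
  else if hx : ∃ n, x = - aa n then -((aa (hx.choose + 1) : ℝ) : ℂ)
  else 0

lemma ff_aa (n : ℕ) : ff (aa n) = ((aa (n+1) : ℝ) : ℂ) := by
  unfold ff
  have hx : ∃ m, aa n = aa m := ⟨n, rfl⟩
  rw [dif_pos hx]
  have : hx.choose = n := (aa_inj hx.choose_spec).symm
  rw [this]

lemma ff_neg_aa (n : ℕ) : ff (-aa n) = -((aa (n+1) : ℝ) : ℂ) := by
  unfold ff
  have hx1 : ¬ ∃ m, -aa n = aa m := by
    rintro ⟨m, hm⟩
    have h1 := aa_pos m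
    have h2 := aa_pos n
    rw [← hm] at h1
    linarith
  rw [dif_neg hx1]
  have hx : ∃ m, -aa n = -aa m := ⟨n, rfl⟩
  rw [dif_pos hx]
  have h : aa n = aa hx.choose := by
    have := hx.choose_spec
    linarith
  have : hx.choose = n := (aa_inj h).symm
  rw [this]

lemma ff_zero : ff 0 = 0 := by
  unfold ff
  rw [dif_neg, dif_neg]
  · rintro ⟨m, hm⟩
    have := aa_pos m
    rw [← neg_eq_iff_eq_neg] at hm
    simp at hm
    linarith [hm ▸ this]
  · rintro ⟨m, hm⟩
    have := aa_pos m
    linarith [hm ▸ this]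

lemma fwd_TT_zero : fwd TT 0 = 0 := by
  have hne : {s | s ∈ TT ∧ (0:ℝ) < s}.Nonempty := ⟨aa 0, aa_mem_TT 0, aa_pos 0⟩
  rw [fwd, if_pos hne]
  have hbdd : BddBelow {s | s ∈ TT ∧ (0:ℝ) < s} := ⟨0, fun x hx => hx.2.le⟩
  refine le_antisymm ?_ (le_csInf hne fun x hx => hx.2.le)
  exact ge_of_tendsto' aa_tendsto fun n => csInf_le hbdd ⟨aa_mem_TT n, aa_pos n⟩

lemma bwd_TT_zero : bwd TT 0 = 0 := by
  have hne : {s | s ∈ TT ∧ s < (0:ℝ)}.Nonempty :=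
    ⟨-aa 0, neg_aa_mem_TT 0, by linarith [aa_pos 0]⟩
  rw [bwd, if_pos hne]
  have hbdd : BddAbove {s | s ∈ TT ∧ s < (0:ℝ)} := ⟨0, fun x hx => hx.2.le⟩
  refine le_antisymm (csSup_le hne fun x hx => hx.2.le) ?_
  have : Tendsto (fun n => -aa n) atTop (𝓝 (0:ℝ)) := by simpa using aa_tendsto.neg
  exact le_of_tendsto' this fun n =>
    le_csSup hbdd ⟨neg_aa_mem_TT n, by linarith [aa_pos n]⟩

lemma fwd_TT_mid {n : ℕ} {v : ℝ} (h1 : aa (n+1) < v) (h2 : v < aa n) :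
    fwd TT v = aa n := by
  have hv : 0 < v := (aa_pos (n+1)).trans h1
  have hL : IsLeast {s | s ∈ TT ∧ v < s} (aa n) := by
    constructor
    · exact ⟨aa_mem_TT n, h2⟩
    · rintro s ⟨hsT, hvs⟩
      rcases mem_TT_iff.mp hsT with h0 | ⟨m, hm⟩ | ⟨m, hm⟩
      · exact absurd (h0 ▸ hvs) (by linarith)
      · subst hm
        by_contra hlt
        push_neg at hlt
        have : n < m := aa_strictAnti.lt_iff_gt.mp hlt
        have : aa m ≤ aa (n+1) := aa_strictAnti.antitone (by omega)
        linarith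
      · subst hm
        have := aa_pos m
        linarith
  have hne : {s | s ∈ TT ∧ v < s}.Nonempty := ⟨aa n, hL.1⟩
  rw [fwd, if_pos hne, hL.csInf_eq]

lemma mid_not_mem_TT {n : ℕ} {v : ℝ} (h1 : aa (n+1) < v) (h2 : v < aa n) :
    v ∉ TT := by
  have hv : 0 < v := (aa_pos (n+1)).trans h1
  intro hmem
  rcases mem_TT_iff.mp hmem with h0 | ⟨m, hm⟩ | ⟨m, hm⟩
  · linarith
  · subst hm
    have hmn : n < m := aa_strictAnti.lt_iff_gt.mp h2
    have hmn2 : m < n+1 := aa_strictAnti.lt_iff_gt.mp h1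
    omega
  · subst hm
    have := aa_pos m
    linarith

lemma hasDelta : HasDeltaDerivAt TT ff 0 0 := by
  intro ε hε
  obtain ⟨N, hN⟩ := exists_nat_gt (1/ε)
  refine ⟨Metric.ball 0 (aa N) ∩ TT,
    inter_mem (nhdsWithin_le_nhds (Metric.ball_mem_nhds _ (aa_pos N))) self_mem_nhdsWithin, ?_⟩
  rintro s ⟨hs1, hs2⟩
  rw [fwd_TT_zero, ff_zero]
  rw [Metric.mem_ball, Real.dist_eq, sub_zero] at hs1
  have key : ∀ m : ℕ, |s| = aa m → ‖ff s‖ = aa (m+1) → ‖ff s‖ ≤ ε * |s| := by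
    intro m habs hnorm
    have hm : aa m < aa N := habs ▸ hs1
    have hNm : N < m := aa_strictAnti.lt_iff_gt.mp hm
    have h1 : 1 < ((m:ℝ)+2) * ε := by
      have h2 : (1:ℝ)/ε < (m:ℝ)+2 := by
        have : (N:ℝ) < (m:ℝ)+2 := by exact_mod_cast Nat.lt_of_lt_of_le hNm (by omega)
        linarith
      calc (1:ℝ) = (1/ε) * ε := by field_simp
      _ < ((m:ℝ)+2) * ε := by exact mul_lt_mul_of_pos_right h2 hε
    rw [hnorm, habs]
    nlinarith [aa_pos (m+1), aa_succ m]
  have hgoal : ‖ff s‖ ≤ ε * |s| := by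
    rcases mem_TT_iff.mp hs2 with h0 | ⟨m, hm⟩ | ⟨m, hm⟩
    · subst h0
      simp [ff_zero]
    · subst hm
      refine key m (abs_of_pos (aa_pos m)) ?_
      rw [ff_aa, Complex.norm_real]
      exact abs_of_pos (aa_pos (m+1))
    · subst hm
      refine key m (abs_neg (aa m) ▸ abs_of_pos (aa_pos m)) ?_
      rw [ff_neg_aa, norm_neg, Complex.norm_real]
      exact abs_of_pos (aa_pos (m+1))
  calc ‖(0:ℂ) - ff s - 0 * (((0:ℝ):ℂ) - (s:ℂ))‖ = ‖ff s‖ := by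
        simp
  _ ≤ ε * |s| := hgoal
  _ = ε * |0 - s| := by rw [zero_sub, abs_neg]

noncomputable def vv (n : ℕ) : ℝ := aa (n+1) * (((n:ℝ)+3)/((n:ℝ)+2))

lemma vv_gt (n : ℕ) : aa (n+1) < vv n := by
  unfold vv
  nth_rewrite 1 [← mul_one (aa (n+1))]
  apply mul_lt_mul_of_pos_left _ (aa_pos (n+1))
  rw [lt_div_iff₀ (by positivity)]
  linarith

lemma vv_lt (n : ℕ) : vv n < aa n := by
  unfold vv
  rw [aa_succ n]
  rw [mul_comm ((n:ℝ)+2) (aa (n+1))]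
  apply mul_lt_mul_of_pos_left _ (aa_pos (n+1))
  rw [div_lt_iff₀ (by positivity)]
  nlinarith

lemma vv_pos (n : ℕ) : 0 < vv n := (aa_pos (n+1)).trans (vv_gt n)

lemma aa_succ_tendsto : Tendsto (fun n => aa (n+1)) atTop (𝓝 0) :=
  aa_tendsto.comp (tendsto_add_atTop_nat 1)

lemma vv_tendsto : Tendsto vv atTop (𝓝 0) := by
  apply squeeze_zero (f := vv) (g := fun n : ℕ => 2 * aa (n+1)) (fun n => (vv_pos n).le)
  · intro n
    unfold vv
    rw [mul_comm 2 (aa (n+1))]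
    apply mul_le_mul_of_nonneg_left _ (aa_pos (n+1)).le
    rw [div_le_iff₀ (by positivity)]
    linarith
  · simpa using aa_succ_tendsto.const_mul 2

lemma aa_ratio (n : ℕ) : aa (n+1) / aa n = (((n:ℝ)+2))⁻¹ := by
  rw [aa_succ n, mul_comm, div_mul_eq_div_div, div_self (aa_pos (n+1)).ne', one_div]

lemma vv_ratio (n : ℕ) : aa (n+1) / vv n = ((n:ℝ)+2)/((n:ℝ)+3) := by
  unfold vv
  rw [div_mul_eq_div_div, div_self (aa_pos (n+1)).ne', one_div_div]

lemma tsE_mem {s : ℝ} (h : s ∈ TT) : tsExtend TT ff s = ff s := by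
  simp only [tsExtend, if_pos h]

lemma tsE_not_mem {s : ℝ} (h : s ∉ TT) : tsExtend TT ff s = ff (fwd TT s) := by
  simp only [tsExtend, if_neg h]

lemma quot_aa (n : ℕ) :
    (tsExtend TT ff (aa n) - tsExtend TT ff 0) / ((aa n : ℂ) - (((0:ℝ)) : ℂ)) =
      (((((n:ℝ)+2))⁻¹ : ℝ) : ℂ) := by
  rw [tsE_mem (aa_mem_TT n), tsE_mem zero_mem_TT, ff_zero, ff_aa]
  rw [Complex.ofReal_zero, sub_zero, sub_zero, ← Complex.ofReal_div, aa_ratio]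

lemma quot_vv (n : ℕ) :
    (tsExtend TT ff (vv n) - tsExtend TT ff 0) / ((vv n : ℂ) - (((0:ℝ)) : ℂ)) =
      (((((n:ℝ)+2)/((n:ℝ)+3)) : ℝ) : ℂ) := by
  rw [tsE_not_mem (mid_not_mem_TT (vv_gt n) (vv_lt n)), tsE_mem zero_mem_TT,
    ff_zero, fwd_TT_mid (vv_gt n) (vv_lt n), ff_aa]
  rw [Complex.ofReal_zero, sub_zero, sub_zero, ← Complex.ofReal_div, vv_ratio]

end XDE

open XDE in
theorem exists_delta_differentiable_extension_not_right_differentiable :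
    ∃ (T : Set ℝ) (t : ℝ) (f : ℝ → ℂ),
      IsClosed T ∧ T.Nonempty ∧ t ∈ T ∧
      fwd T t = t ∧ bwd T t = t ∧
      (∃ L, HasDeltaDerivAt T f t L) ∧
      ¬ ∃ L' : ℂ, Tendsto
          (fun s : ℝ => (tsExtend T f s - tsExtend T f t) / ((s : ℂ) - (t : ℂ)))
          (𝓝[>] t) (𝓝 L') := by
  refine ⟨TT, 0, ff, TT_closed, ⟨0, zero_mem_TT⟩, zero_mem_TT, fwd_TT_zero, bwd_TT_zero,
    ⟨0, hasDelta⟩, ?_⟩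
  rintro ⟨L', hL⟩
  -- along aa the quotients tend to 0
  have haa_to : Tendsto aa atTop (𝓝[>] (0:ℝ)) :=
    tendsto_nhdsWithin_of_tendsto_nhds_of_eventually_within _ aa_tendsto
      (Eventually.of_forall fun n => aa_pos n)
  have h0 := hL.comp haa_to
  simp only [Function.comp_def, quot_aa] at h0
  have hre0 : Tendsto (fun n : ℕ => (((n:ℝ)+2))⁻¹) atTop (𝓝 0) :=
    tendsto_inv_atTop_zero.comp
      (tendsto_atTop_add_const_right atTop 2 tendsto_natCast_atTop_atTop)
  have h0' := (Complex.continuous_ofReal.tendsto 0).comp hre0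
  simp only [Function.comp_def, Complex.ofReal_zero] at h0'
  have hL0 : L' = 0 := tendsto_nhds_unique h0 h0'
  -- along vv the quotients tend to 1
  have hvv_to : Tendsto vv atTop (𝓝[>] (0:ℝ)) :=
    tendsto_nhdsWithin_of_tendsto_nhds_of_eventually_within _ vv_tendsto
      (Eventually.of_forall fun n => vv_pos n)
  have h1 := hL.comp hvv_to
  simp only [Function.comp_def, quot_vv] at h1
  have hre1 : Tendsto (fun n : ℕ => ((n:ℝ)+2)/((n:ℝ)+3)) atTop (𝓝 1) := by
    have hinv : Tendsto (fun n : ℕ => (((n:ℝ)+3))⁻¹) atTop (𝓝 0) :=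
      tendsto_inv_atTop_zero.comp
        (tendsto_atTop_add_const_right atTop 3 tendsto_natCast_atTop_atTop)
    have hsub : Tendsto (fun n : ℕ => 1 - (((n:ℝ)+3))⁻¹) atTop (𝓝 (1 - 0)) :=
      tendsto_const_nhds.sub hinv
    rw [sub_zero] at hsub
    have heq : (fun n : ℕ => ((n:ℝ)+2)/((n:ℝ)+3)) = fun n : ℕ => 1 - (((n:ℝ)+3))⁻¹ := by
      funext n
      have h3 : ((n:ℝ)+3) ≠ 0 := by positivity
      field_simp
      ring
    rw [heq]
    exact hsub
  have h1' := (Complex.continuous_ofReal.tendsto 1).comp hre1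
  simp only [Function.comp_def, Complex.ofReal_one] at h1'
  have hL1 : L' = 1 := tendsto_nhds_unique h1 h1'
  rw [hL0] at hL1
  exact zero_ne_one hL1
end

section
/- Let T be a time scale, a, b ∈ T with a < b, and suppose g ∈ L¹([a,b); μ_σ) with f̄(x) = f̄(a) + ∫_{[a,x)} g dμ_σ for x ∈ [a,b], where f̄ is the extension of f : T → ℂ. If t ∈ [a,b) ∩ T is an isolated point of T (both right and left scattered), then f is delta differentiable at t with f^Δ(t) = (1/μ_σ({t})) ∫_{{t}} g dμ_σ = g(t). -/
open Set MeasureTheory Filter Topology Function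

theorem deltaDeriv_at_isolated_point
    (T : Set ℝ) (hne : T.Nonempty) (hcl : IsClosed T)
    (F : StieltjesFunction ℝ) (hF : ∀ t, F t = fwd T t)
    (f g : ℝ → ℂ) (a b : ℝ) (ha : a ∈ T) (hb : b ∈ T) (hab : a < b)
    (hg : IntegrableOn g (Ico a b) F.measure)
    (hrep : ∀ x ∈ Icc a b,
      tsExtend T f x = tsExtend T f a + ∫ s in Ico a x, g s ∂F.measure)
    (t : ℝ) (ht : t ∈ Ico a b) (htT : t ∈ T)
    (hrs : t < fwd T t) (hls : bwd T t < t) :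
    HasDeltaDerivAt T f t
        ((F.measure {t}).toReal⁻¹ • ∫ s in ({t} : Set ℝ), g s ∂F.measure) ∧
      ((F.measure {t}).toReal⁻¹ • ∫ s in ({t} : Set ℝ), g s ∂F.measure) = g t := by
  classical
  obtain ⟨hat, htb⟩ := ht
  set σ := fwd T t with hσ
  set ρ := bwd T t with hρ
  -- basic facts about σ
  have hSne : {s | s ∈ T ∧ t < s}.Nonempty := ⟨b, hb, htb⟩
  have hσdef : σ = sInf {s | s ∈ T ∧ t < s} := by
    rw [hσ, fwd, if_pos hSne]
  have hbddS : BddBelow {s | s ∈ T ∧ t < s} := ⟨t, fun u hu => hu.2.le⟩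
  have hσT : σ ∈ T := by
    have h1 : σ ∈ closure {s | s ∈ T ∧ t < s} := hσdef ▸ csInf_mem_closure hSne hbddS
    have h2 : closure {s | s ∈ T ∧ t < s} ⊆ T := by
      refine closure_minimal (fun u hu => hu.1) hcl
    exact h2 h1
  have hσb : σ ≤ b := hσdef ▸ csInf_le hbddS ⟨hb, htb⟩
  have hσmem : σ ∈ {s | s ∈ T ∧ t < s} := ⟨hσT, hrs⟩
  -- no points of T strictly between t and σ
  have hgap : ∀ u ∈ T, t < u → σ ≤ u := fun u hu htu =>
    hσdef ▸ csInf_le hbddS ⟨hu, htu⟩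
  -- no points of T strictly between ρ and t
  have hgapL : ∀ u ∈ T, u < t → u ≤ ρ := by
    intro u hu hut
    have hPne : {s | s ∈ T ∧ s < t}.Nonempty := ⟨u, hu, hut⟩
    have : ρ = sSup {s | s ∈ T ∧ s < t} := by rw [hρ, bwd, if_pos hPne]
    exact this ▸ le_csSup ⟨t, fun v hv => hv.2.le⟩ ⟨hu, hut⟩
  -- value of F on (ρ, t)
  have hFleft : ∀ s ∈ Ioo ρ t, F s = t := by
    rintro s ⟨hρs, hst⟩
    have hne' : {u | u ∈ T ∧ s < u}.Nonempty := ⟨t, htT, hst⟩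
    have : fwd T s = sInf {u | u ∈ T ∧ s < u} := by rw [fwd, if_pos hne']
    rw [hF, this]
    refine le_antisymm (csInf_le ⟨s, fun u hu => hu.2.le⟩ ⟨htT, hst⟩) ?_
    refine le_csInf hne' ?_
    rintro u ⟨huT, hsu⟩
    by_contra h
    push_neg at h
    exact absurd (hgapL u huT h) (not_le.mpr (lt_trans hρs hsu))
  -- value of F on [t, σ)
  have hFright : ∀ s ∈ Ico t σ, F s = σ := by
    rintro s ⟨hts, hsσ⟩
    have hne' : {u | u ∈ T ∧ s < u}.Nonempty := ⟨σ, hσT, hsσ⟩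
    have : fwd T s = sInf {u | u ∈ T ∧ s < u} := by rw [fwd, if_pos hne']
    rw [hF, this]
    refine le_antisymm (csInf_le ⟨s, fun u hu => hu.2.le⟩ ⟨hσT, hsσ⟩) ?_
    refine le_csInf hne' ?_
    rintro u ⟨huT, hsu⟩
    exact hgap u huT (lt_of_le_of_lt hts hsu)
  -- left limits
  have hllt : Function.leftLim F t = t := by
    apply leftLim_eq_of_tendsto
    have hev : F =ᶠ[𝓝[<] t] fun _ => t := by
      filter_upwards [Ioo_mem_nhdsLT_of_mem ⟨hls, le_refl t⟩] with s hs
      exact hFleft s hs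
    exact Tendsto.congr' hev.symm tendsto_const_nhds
  have hllσ : Function.leftLim F σ = σ := by
    apply leftLim_eq_of_tendsto
    have hev : F =ᶠ[𝓝[<] σ] fun _ => σ := by
      filter_upwards [Ioo_mem_nhdsLT_of_mem ⟨hrs, le_refl σ⟩] with s hs
      exact hFright s ⟨hs.1.le, hs.2⟩
    exact Tendsto.congr' hev.symm tendsto_const_nhds
  have hFt : F t = σ := hFright t ⟨le_refl t, hrs⟩
  -- measure of the singleton
  have hμt : F.measure {t} = ENNReal.ofReal (σ - t) := by
    rw [StieltjesFunction.measure_singleton, hllt, hFt]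
  have hμtR : (F.measure {t}).toReal = σ - t := by
    rw [hμt, ENNReal.toReal_ofReal (by linarith)]
  have hμtne : (F.measure {t}).toReal ≠ 0 := by rw [hμtR]; linarith
  -- measure of the open gap is zero
  have hμIoo : F.measure (Ioo t σ) = 0 := by
    rw [StieltjesFunction.measure_Ioo, hllσ, hFt, sub_self, ENNReal.ofReal_zero]
  -- Ico t σ is a.e. equal to {t}
  have haeeq : (Ico t σ : Set ℝ) =ᵐ[F.measure] ({t} : Set ℝ) := by
    rw [MeasureTheory.ae_eq_set]
    constructor
    · refine measure_mono_null (fun u hu => ?_) hμIoo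
      rcases hu with ⟨⟨h1, h2⟩, h3⟩
      simp only [mem_singleton_iff] at h3
      exact ⟨lt_of_le_of_ne h1 (Ne.symm h3), h2⟩
    · refine measure_mono_null (fun u hu => ?_) (measure_empty (μ := F.measure))
      rcases hu with ⟨h1, h2⟩
      simp only [mem_singleton_iff] at h1
      exact absurd ⟨le_of_eq h1.symm, h1 ▸ hrs⟩ h2
  -- integral over Ico t σ equals integral over {t}
  have hintIco : ∫ s in Ico t σ, g s ∂F.measure = ∫ s in ({t} : Set ℝ), g s ∂F.measure :=
    setIntegral_congr_set haeeq
  have hint_singleton : ∫ s in ({t} : Set ℝ), g s ∂F.measure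
      = (F.measure {t}).toReal • g t := integral_singleton g t
  -- second claim
  have hL : ((F.measure {t}).toReal⁻¹ • ∫ s in ({t} : Set ℝ), g s ∂F.measure) = g t := by
    rw [hint_singleton, inv_smul_smul₀ hμtne]
  refine ⟨?_, hL⟩
  rw [hL]
  -- key identity: f σ - f t = g t * (σ - t)
  have hσIcc : σ ∈ Icc a b := ⟨le_trans hat hrs.le, hσb⟩
  have htIcc : t ∈ Icc a b := ⟨hat, htb.le⟩
  have hrepσ := hrep σ hσIcc
  have hrept := hrep t htIcc
  have heσ : tsExtend T f σ = f σ := by rw [tsExtend]; simp [hσT]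
  have het : tsExtend T f t = f t := by rw [tsExtend]; simp [htT]
  rw [heσ] at hrepσ
  rw [het] at hrept
  have hadd : ∫ s in Ico a σ, g s ∂F.measure
      = (∫ s in Ico a t, g s ∂F.measure) + ∫ s in Ico t σ, g s ∂F.measure := by
    rw [← setIntegral_union (Set.Ico_disjoint_Ico_same) measurableSet_Ico
      (hg.mono_set (Ico_subset_Ico_right htb.le))
      (hg.mono_set (Ico_subset_Ico hat hσb)),
      Ico_union_Ico_eq_Ico hat hrs.le]
  have hkey : f σ - f t = ((σ - t : ℝ) : ℂ) * g t := by
    have : f σ - f t = ∫ s in Ico t σ, g s ∂F.measure := by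
      rw [hrepσ, hrept, hadd]; ring
    rw [this, hintIco, hint_singleton, hμtR]
    simp [Complex.real_smul]
  -- now the derivative estimate
  intro ε hε
  refine ⟨{t}, ?_, ?_⟩
  · rw [mem_nhdsWithin]
    refine ⟨Ioo ρ σ, isOpen_Ioo, ⟨hls, hrs⟩, ?_⟩
    rintro u ⟨⟨h1, h2⟩, huT⟩
    simp only [mem_singleton_iff]
    by_contra hu
    rcases lt_or_gt_of_ne hu with h | h
    · exact absurd (hgapL u huT h) (not_le.mpr h1)
    · exact absurd (hgap u huT h) (not_le.mpr h2)
  · intro s hs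
    simp only [mem_singleton_iff] at hs
    subst hs
    have : f σ - f s - g s * ((σ : ℂ) - (s : ℂ)) = 0 := by
      rw [hkey]; push_cast; ring
    rw [this, norm_zero]
    positivity
end
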